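/- Let $A$ be a unital ring, $W$ a finite group, $W' \leq W$ a subgroup with a homomorphism from $W'$ to the units of $A$, and let $Z(W,W',A) = \operatorname{End}_A(\operatorname{Map}_{W'}(W,A))$ be the centralizer algebra. Define the idempotent $e(W') \in Z(W,W',A)$ by $(e(W')f)(u) = f(u)$ if $u \in W'$ and $(e(W')f)(u) = 0$ otherwise. Then $e(W')$ is a well-defined idempotent endomorphism and the corner ring $e(W') \, Z(W,W',A) \, e(W')$ is isomorphic as a ring to $A$. -/
import Mathlib


/-- The right `A`-module `Map_{W'}(W, A) = {f : W → A ∣ f (w' * w) = φ(w') * f w}`,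
realized as a submodule of `W → A` over `Aᵐᵒᵖ` (right `A`-modules = left `Aᵐᵒᵖ`-modules). -/
def MapsWprime (A : Type*) [Ring A] (W : Type*) [Group W]
    (W' : Subgroup W) (φ : W' →* Aˣ) : Submodule Aᵐᵒᵖ (W → A) where
  carrier := {f | ∀ (w' : W') (w : W), f ((w' : W) * w) = (φ w' : A) * f w}
  add_mem' {f g} hf hg := by
    intro w' w
    simp only [Pi.add_apply, hf w' w, hg w' w, mul_add]
  zero_mem' := by intro w' w; simp
  smul_mem' := by
    intro a f hf w' w
    simp only [Pi.smul_apply, MulOpposite.smul_eq_mul_unop, hf w' w, mul_assoc]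

namespace CornerAux

open scoped Classical

variable {A : Type*} [Ring A] {W : Type*} [Group W] (W' : Subgroup W) (φ : W' →* Aˣ)

lemma apply_of_mem {f : W → A} (hf : f ∈ MapsWprime A W W' φ) {u : W} (hu : u ∈ W') :
    f u = (φ ⟨u, hu⟩ : A) * f 1 := by
  have := hf ⟨u, hu⟩ 1
  simpa using this

lemma mul_notMem {w : W} (w' : W') (h : w ∉ W') : (w' : W) * w ∉ W' := fun hc =>
  h (by simpa using mul_mem (inv_mem w'.2) hc)


lemma phi_one : (φ ⟨(1 : W), one_mem W'⟩ : A) = 1 := by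
  have h : (⟨(1 : W), one_mem W'⟩ : W') = 1 := rfl
  rw [h, map_one, Units.val_one]

variable (A) in
noncomputable def eFun (f : W → A) : W → A := fun u => if u ∈ W' then f u else 0

lemma eFun_mem {f : W → A} (hf : f ∈ MapsWprime A W W' φ) :
    eFun A W' f ∈ MapsWprime A W W' φ := by
  intro w' w
  by_cases h : w ∈ W'
  · have h2 : (w' : W) * w ∈ W' := mul_mem w'.2 h
    simp [eFun, h, h2, hf w' w]
  · have h2 : (w' : W) * w ∉ W' := mul_notMem W' w' h
    simp [eFun, h, h2]

noncomputable def eEnd : Module.End Aᵐᵒᵖ (MapsWprime A W W' φ) where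
  toFun f := ⟨eFun A W' f, eFun_mem W' φ f.2⟩
  map_add' f g := by
    ext u
    simp only [eFun, Submodule.coe_add, Pi.add_apply]
    split <;> simp
  map_smul' a f := by
    ext u
    simp only [eFun, SetLike.val_smul, Pi.smul_apply, MulOpposite.smul_eq_mul_unop,
      RingHom.id_apply]
    split <;> simp

lemma eEnd_apply (f : MapsWprime A W W' φ) (u : W) :
    ((eEnd W' φ f : W → A)) u = if u ∈ W' then (f : W → A) u else 0 := rfl

variable (A) in
noncomputable def phiFun (a : A) (f : W → A) : W → A :=
  fun u => if h : u ∈ W' then (φ ⟨u, h⟩ : A) * (a * f 1) else 0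

lemma phiFun_mem (a : A) (f : W → A) : phiFun A W' φ a f ∈ MapsWprime A W W' φ := by
  intro w' w
  by_cases h : w ∈ W'
  · have h2 : (w' : W) * w ∈ W' := mul_mem w'.2 h
    have key : (⟨(w' : W) * w, h2⟩ : W') = w' * ⟨w, h⟩ := rfl
    simp only [phiFun, dif_pos h, dif_pos h2, key, map_mul, Units.val_mul, mul_assoc]
  · have h2 : (w' : W) * w ∉ W' := mul_notMem W' w' h
    simp [phiFun, h, h2]

noncomputable def phiEnd (a : A) : Module.End Aᵐᵒᵖ (MapsWprime A W W' φ) where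
  toFun f := ⟨phiFun A W' φ a f, phiFun_mem W' φ a f⟩
  map_add' f g := by
    ext u
    simp only [phiFun, Submodule.coe_add, Pi.add_apply]
    split <;> simp [mul_add]
  map_smul' b f := by
    ext u
    simp only [phiFun, SetLike.val_smul, Pi.smul_apply, MulOpposite.smul_eq_mul_unop,
      RingHom.id_apply]
    split <;> simp [mul_assoc]


lemma phiEnd_coe (a : A) (f : MapsWprime A W W' φ) :
    ((phiEnd W' φ a f : W → A)) = phiFun A W' φ a (f : W → A) := rfl

lemma phiFun_apply_one (a : A) (f : W → A) :
    phiFun A W' φ a f 1 = a * f 1 := by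
  rw [phiFun, dif_pos (one_mem W'), phi_one, one_mul]

lemma eEnd_apply_one (f : MapsWprime A W W' φ) :
    ((eEnd W' φ f : W → A)) 1 = (f : W → A) 1 := by
  rw [eEnd_apply, if_pos (one_mem W')]

variable (A) in
noncomputable def f0 : W → A := fun u => if h : u ∈ W' then (φ ⟨u, h⟩ : A) else 0

lemma f0_mem : f0 A W' φ ∈ MapsWprime A W W' φ := by
  intro w' w
  by_cases h : w ∈ W'
  · have h2 : (w' : W) * w ∈ W' := mul_mem w'.2 h
    have key : (⟨(w' : W) * w, h2⟩ : W') = w' * ⟨w, h⟩ := rfl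
    simp only [f0, dif_pos h, dif_pos h2, key, map_mul, Units.val_mul]
  · have h2 : (w' : W) * w ∉ W' := mul_notMem W' w' h
    simp [f0, h, h2]

noncomputable def F0 : MapsWprime A W W' φ := ⟨f0 A W' φ, f0_mem W' φ⟩

lemma f0_one : f0 A W' φ 1 = 1 := by
  rw [f0, dif_pos (one_mem W'), phi_one]

lemma eEnd_eq_smul (f : MapsWprime A W W' φ) :
    eEnd W' φ f = (MulOpposite.op ((f : W → A) 1)) • F0 W' φ := by
  ext u
  simp only [eEnd_apply, SetLike.val_smul, Pi.smul_apply, MulOpposite.smul_eq_mul_unop,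
    MulOpposite.unop_op, F0, f0]
  by_cases h : u ∈ W'
  · rw [if_pos h, dif_pos h, apply_of_mem W' φ f.2 h]
  · rw [if_neg h, dif_neg h, zero_mul]

end CornerAux

open scoped Classical in
/-- There is a well-defined idempotent `e(W') ∈ Z(W,W',A) = End_A(Map_{W'}(W,A))`, given by
`(e(W')f)(u) = f u` for `u ∈ W'` and `0` otherwise, and the corner ring
`e(W') Z(W,W',A) e(W')` is isomorphic to `A` as a (unital) ring: there is an injective
additive and multiplicative map `Φ : A → Z(W,W',A)` with `Φ 1 = e(W')` whose image is
exactly the corner `{z ∣ e(W') * z * e(W') = z}`. -/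
theorem corner_of_centralizer_algebra (A : Type*) [Ring A]
    (W : Type*) [Group W] [Fintype W] (W' : Subgroup W) (φ : W' →* Aˣ) :
    ∃ e : Module.End Aᵐᵒᵖ (MapsWprime A W W' φ),
      (∀ (f : MapsWprime A W W' φ) (u : W),
        ((e f : W → A) u) = if u ∈ W' then (f : W → A) u else 0) ∧
      e * e = e ∧
      ∃ Φ : A → Module.End Aᵐᵒᵖ (MapsWprime A W W' φ),
        (∀ a b : A, Φ (a + b) = Φ a + Φ b) ∧
        (∀ a b : A, Φ (a * b) = Φ a * Φ b) ∧
        Φ 1 = e ∧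
        Function.Injective Φ ∧
        Set.range Φ = {z | e * z * e = z} := by
  classical
  refine ⟨CornerAux.eEnd W' φ, fun f u => rfl, ?_, CornerAux.phiEnd W' φ, ?_, ?_, ?_, ?_, ?_⟩
  · -- idempotent
    ext f u
    simp only [Module.End.mul_apply, CornerAux.eEnd_apply]
    by_cases h : u ∈ W' <;> simp [h, CornerAux.eEnd_apply]
  · -- additive
    intro a b
    ext f u
    simp only [CornerAux.phiEnd, LinearMap.coe_mk, AddHom.coe_mk, LinearMap.add_apply,
      Submodule.coe_add, Pi.add_apply, CornerAux.phiFun]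
    split <;> simp [add_mul, mul_add]
  · -- multiplicative
    intro a b
    ext f u
    rw [Module.End.mul_apply]
    show CornerAux.phiFun A W' φ (a * b) (f : W → A) u
      = CornerAux.phiFun A W' φ a (CornerAux.phiFun A W' φ b (f : W → A)) u
    by_cases h : u ∈ W'
    · rw [CornerAux.phiFun, CornerAux.phiFun, dif_pos h, dif_pos h,
        CornerAux.phiFun_apply_one, mul_assoc]
    · rw [CornerAux.phiFun, CornerAux.phiFun, dif_neg h, dif_neg h]
  · -- Φ 1 = e
    ext f u
    simp only [CornerAux.phiEnd, LinearMap.coe_mk, AddHom.coe_mk, CornerAux.phiFun,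
      CornerAux.eEnd_apply]
    by_cases h : u ∈ W'
    · rw [dif_pos h, if_pos h, one_mul, ← CornerAux.apply_of_mem W' φ f.2 h]
    · rw [dif_neg h, if_neg h]
  · -- injective
    intro a b hab
    have := congrArg (fun z => ((z (CornerAux.F0 W' φ) : W → A)) 1) hab
    simpa [CornerAux.phiEnd, CornerAux.phiFun, CornerAux.F0, one_mem, CornerAux.f0_one,
      CornerAux.f0] using this
  · -- range
    ext z
    simp only [Set.mem_range, Set.mem_setOf_eq]
    constructor
    · rintro ⟨a, rfl⟩
      ext f u
      rw [Module.End.mul_apply, Module.End.mul_apply, CornerAux.eEnd_apply]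
      by_cases h : u ∈ W'
      · rw [if_pos h, CornerAux.phiEnd_coe, CornerAux.phiEnd_coe]
        simp only [CornerAux.phiFun, dif_pos h]
        rw [CornerAux.eEnd_apply_one]
      · rw [if_neg h, CornerAux.phiEnd_coe]
        simp only [CornerAux.phiFun, dif_neg h]
    · intro hz
      refine ⟨((z (CornerAux.F0 W' φ) : W → A)) 1, ?_⟩
      ext f u
      have hzf : z f = CornerAux.eEnd W' φ (z (CornerAux.eEnd W' φ f)) := by
        conv_lhs => rw [← hz]
        rfl
      rw [hzf, CornerAux.eEnd_eq_smul W' φ f, map_smul, map_smul]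
      simp only [CornerAux.phiEnd, LinearMap.coe_mk, AddHom.coe_mk, CornerAux.phiFun,
        SetLike.val_smul, Pi.smul_apply, MulOpposite.smul_eq_mul_unop, MulOpposite.unop_op,
        CornerAux.eEnd_apply]
      by_cases h : u ∈ W'
      · rw [dif_pos h, if_pos h,
          CornerAux.apply_of_mem W' φ (z (CornerAux.F0 W' φ)).2 h, mul_assoc]
      · rw [dif_neg h, if_neg h, zero_mul]
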